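/- Suppose the set Γ_ν^+ of positive elements of the value group has a smallest element σ, and let ω be a valuation of L extending ν such that ω(φ_i(α)) = σ/l_i for some i ∈ {1, …, r}. Then l_i divides the ramification index e(ω/ν) = [Γ_ω : Γ_ν], and deg(φ_i) divides the residue degree f(ω/ν) = [k_ω : k_ν]; in particular, the residue field k_ω contains a subfield isomorphic to k_ν[x]/(φ̄_i). -/

import Mathlib

open Polynomial

section Helpers

variable {K L : Type*} [Field K] [Field L] [Algebra K L]
variable {Γ₀ : Type*} [LinearOrderedCommGroupWithZero Γ₀]

/-- The Gauss valuation of a polynomial `P ∈ K[x]`, computed in the value group of a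
valuation `w` on an extension `L` of `K`: multiplicatively it is the supremum of the
`w`-values of the coefficients (additively, the minimum of the valuations of the
coefficients). -/
noncomputable def gaussVal {Γ' : Type*} [LinearOrderedCommGroupWithZero Γ']
    (w : Valuation L Γ') (P : K[X]) : Γ' :=
  (Finset.range (P.natDegree + 1)).sup'
    (Finset.nonempty_range_iff.mpr (Nat.succ_ne_zero _))
    fun n => w (algebraMap K L (P.coeff n))

/-- `σ` is the smallest positive element of the value group of `v`: multiplicatively,
`σ` is the greatest element `< 1` among the nonzero values of `v`. -/
def IsMinPosValue (v : Valuation K Γ₀) (σ : Γ₀) : Prop :=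
  IsGreatest {γ : Γ₀ | γ ≠ 0 ∧ γ < 1 ∧ ∃ x : K, v x = γ} σ

/-- The set of valuation subrings of `L` whose corresponding valuation extends `v`,
i.e. those lying over the valuation ring of `v`. (Valuations of `L` up to equivalence
are the same thing as valuation subrings of `L`.) -/
def valuationExtensions (v : Valuation K Γ₀) : Set (ValuationSubring L) :=
  {O | O.comap (algebraMap K L) = v.valuationSubring}

/-- The inclusion of the valuation ring of `v` into a valuation subring of `L` lying over it. -/
def liftHom (v : Valuation K Γ₀) (O : ValuationSubring L)
    (hO : O.comap (algebraMap K L) = v.valuationSubring) :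
    ↥v.valuationSubring →+* ↥O where
  toFun x := ⟨algebraMap K L x.1, by
    have hx : (x : K) ∈ O.comap (algebraMap K L) := by rw [hO]; exact x.2
    exact hx⟩
  map_one' := by ext; simp
  map_mul' x y := by ext; simp
  map_zero' := by ext; simp
  map_add' x y := by ext; simp

theorem isLocalHom_liftHom (v : Valuation K Γ₀) (O : ValuationSubring L)
    (hO : O.comap (algebraMap K L) = v.valuationSubring) :
    IsLocalHom (liftHom v O hO) := by
  constructor
  intro x hx
  rcases hx with ⟨u, hu⟩
  have huL : ((u : ↥O) : L) = algebraMap K L (x : K) := by rw [hu]; rfl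
  have hx0 : (x : K) ≠ 0 := by
    intro h0
    apply u.ne_zero
    ext
    rw [huL, h0, map_zero]
    rfl
  have hyL : (((u⁻¹ : (↥O)ˣ) : ↥O) : L) = algebraMap K L ((x : K)⁻¹) := by
    have h1 : ((u : ↥O) * ((u⁻¹ : (↥O)ˣ) : ↥O)) = 1 := u.mul_inv
    have h2 : ((u : ↥O) : L) * (((u⁻¹ : (↥O)ˣ) : ↥O) : L) = 1 := by
      exact_mod_cast congrArg (fun z : ↥O => (z : L)) h1
    rw [huL] at h2
    rw [map_inv₀]
    exact eq_inv_of_mul_eq_one_right h2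
  have hinvmem : (x : K)⁻¹ ∈ v.valuationSubring := by
    have hmem : algebraMap K L ((x : K)⁻¹) ∈ O := by
      rw [← hyL]; exact ((u⁻¹ : (↥O)ˣ) : ↥O).2
    have h3 : (x : K)⁻¹ ∈ O.comap (algebraMap K L) := hmem
    rw [hO] at h3
    exact h3
  refine isUnit_iff_exists_inv.mpr ⟨⟨(x : K)⁻¹, hinvmem⟩, ?_⟩
  ext
  exact mul_inv_cancel₀ hx0

/-- The ramification index `e(ω/ν) = [Γ_ω : Γ_ν]` of the valuation corresponding to a
valuation subring `O` of `L` over `v`: the index, in the value group of `O`, of the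
subgroup generated by the values of elements coming from `K`. -/
noncomputable def ramIdx (v : Valuation K Γ₀) (O : ValuationSubring L) : ℕ :=
  (Subgroup.closure {γ : (O.ValueGroup)ˣ |
      ∃ x : K, (γ : O.ValueGroup) = O.valuation (algebraMap K L x)}).index

/-- The residue degree `f(ω/ν) = [k_ω : k_ν]` of the valuation corresponding to a
valuation subring `O` of `L` lying over the valuation ring of `v`. -/
noncomputable def resDeg (v : Valuation K Γ₀) (O : ValuationSubring L)
    (hO : O.comap (algebraMap K L) = v.valuationSubring) : ℕ :=
  letI := isLocalHom_liftHom v O hO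
  letI : Algebra (IsLocalRing.ResidueField ↥v.valuationSubring) (IsLocalRing.ResidueField ↥O) :=
    (IsLocalRing.ResidueField.map (liftHom v O hO)).toAlgebra
  Module.finrank (IsLocalRing.ResidueField ↥v.valuationSubring) (IsLocalRing.ResidueField ↥O)

end Helpers

private theorem aux_le_iff' {K L : Type*} [Field K] [Field L] [Algebra K L]
    {Γ₀ : Type*} [LinearOrderedCommGroupWithZero Γ₀]
    (v : Valuation K Γ₀) (O : ValuationSubring L)
    (hO : O.comap (algebraMap K L) = v.valuationSubring) (x y : K) :
    O.valuation (algebraMap K L x) ≤ O.valuation (algebraMap K L y) ↔ v x ≤ v y := by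
  have hmem : ∀ z : K, O.valuation (algebraMap K L z) ≤ 1 ↔ v z ≤ 1 := by
    intro z
    rw [ValuationSubring.valuation_le_one_iff, ← ValuationSubring.mem_comap, hO,
      Valuation.mem_valuationSubring_iff]
  by_cases hy : y = 0
  · subst hy
    simp only [map_zero, le_zero_iff]
    rw [Valuation.zero_iff, Valuation.zero_iff, _root_.map_eq_zero]
  · have hvy : v y ≠ 0 := (Valuation.ne_zero_iff v).mpr hy
    have hwy : O.valuation (algebraMap K L y) ≠ 0 :=
      (Valuation.ne_zero_iff _).mpr ((_root_.map_ne_zero _).mpr hy)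
    rw [← div_le_one₀ (zero_lt_iff.mpr hwy), ← div_le_one₀ (zero_lt_iff.mpr hvy),
      ← map_div₀ O.valuation, ← map_div₀ v, ← map_div₀ (algebraMap K L)]
    exact hmem _



private theorem aux_part1' {K L : Type*} [Field K] [Field L] [Algebra K L]
    {Γ₀ : Type*} [LinearOrderedCommGroupWithZero Γ₀]
    (v : Valuation K Γ₀) (O : ValuationSubring L)
    (hO : O.comap (algebraMap K L) = v.valuationSubring)
    (σ : Γ₀) (hσ : IsMinPosValue v σ)
    (n : ℕ) (hli : n ≠ 0) (t : L) (a : K) (ha : v a = σ)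
    (hwa0 : O.valuation (algebraMap K L a) ≠ 0)
    (hwφ0 : O.valuation t ≠ 0)
    (hval : O.valuation t ^ n = O.valuation (algebraMap K L a)) :
    n ∣ (Subgroup.closure {γ : (O.ValueGroup)ˣ |
      ∃ x : K, (γ : O.ValueGroup) = O.valuation (algebraMap K L x)}).index := by
  classical
  have hle := aux_le_iff' v O hO
  set S : Set (O.ValueGroup)ˣ :=
    {γ : (O.ValueGroup)ˣ | ∃ x : K, (γ : O.ValueGroup) = O.valuation (algebraMap K L x)}
    with hSdef
  let S' : Subgroup (O.ValueGroup)ˣ :=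
    { carrier := S
      one_mem' := ⟨1, by simp⟩
      mul_mem' := by
        rintro γ δ ⟨x, hx⟩ ⟨y, hy⟩
        exact ⟨x * y, by rw [Units.val_mul, hx, hy, map_mul, map_mul]⟩
      inv_mem' := by
        rintro γ ⟨x, hx⟩
        exact ⟨x⁻¹, by rw [map_inv₀, map_inv₀, ← hx]; exact (Units.val_inv_eq_inv_val γ)⟩ }
  set H : Subgroup (O.ValueGroup)ˣ := Subgroup.closure S with hHdef
  have hclos : H = S' :=
    le_antisymm ((Subgroup.closure_le S').mpr le_rfl) (fun x hx => Subgroup.subset_closure hx)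
  let γ : (O.ValueGroup)ˣ := Units.mk0 _ hwφ0
  let ua : (O.ValueGroup)ˣ := Units.mk0 _ hwa0
  have hγl : γ ^ n = ua := by
    ext
    rw [Units.val_pow_eq_pow_val]
    exact hval
  have hua : ua ∈ H := Subgroup.subset_closure ⟨a, rfl⟩
  have hγq : ((γ : (O.ValueGroup)ˣ) : (O.ValueGroup)ˣ ⧸ H) ^ n = 1 := by
    rw [← QuotientGroup.mk_pow, QuotientGroup.eq_one_iff, hγl]
    exact hua
  set d := orderOf ((γ : (O.ValueGroup)ˣ) : (O.ValueGroup)ˣ ⧸ H) with hddef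
  have hd : d ∣ n := orderOf_dvd_of_pow_eq_one hγq
  have hd0 : d ≠ 0 := fun h => hli (Nat.eq_zero_of_zero_dvd (h ▸ hd))
  have hγd : γ ^ d ∈ H := by
    rw [← QuotientGroup.eq_one_iff, QuotientGroup.mk_pow]
    exact pow_orderOf_eq_one _
  rw [hclos] at hγd
  obtain ⟨x, hx⟩ := hγd
  set k := n / d with hkdef
  have hk : d * k = n := Nat.mul_div_cancel' hd
  have hk0 : k ≠ 0 := by
    intro h
    rw [h, mul_zero] at hk
    exact hli hk.symm
  have hx0 : x ≠ 0 := by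
    intro h
    rw [h, map_zero, map_zero] at hx
    exact (γ ^ d).ne_zero hx
  have hxk : O.valuation (algebraMap K L (x ^ k)) = O.valuation (algebraMap K L a) := by
    have h3 : ((γ ^ d) ^ k : (O.ValueGroup)ˣ) = ua := by
      rw [← pow_mul, hk, hγl]
    have h4 := congrArg (Units.val) h3
    rw [Units.val_pow_eq_pow_val, hx] at h4
    rw [map_pow, map_pow]
    exact h4
  have hvxk : (v x) ^ k = σ := by
    have h5 : v (x ^ k) = v a :=
      le_antisymm ((hle _ _).mp (le_of_eq hxk)) ((hle _ _).mp (le_of_eq hxk.symm))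
    rw [map_pow, ha] at h5
    exact h5
  have hvx0 : v x ≠ 0 := (Valuation.ne_zero_iff v).mpr hx0
  have hvxlt : v x < 1 := by
    by_contra hcon
    push_neg at hcon
    have h6 : (1 : Γ₀) ≤ (v x) ^ k := one_le_pow₀ hcon
    rw [hvxk] at h6
    exact absurd hσ.1.2.1 (not_lt.mpr h6)
  have hvxσ : v x = σ := by
    refine le_antisymm (hσ.2 ⟨hvx0, hvxlt, x, rfl⟩) ?_
    calc σ = (v x) ^ k := hvxk.symm
      _ ≤ (v x) ^ 1 := pow_le_pow_right_of_le_one' (le_of_lt hvxlt) (Nat.one_le_iff_ne_zero.mpr hk0)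
      _ = v x := pow_one _
  have hk1 : k = 1 := by
    by_contra hcon
    have h7 : 1 < k := lt_of_le_of_ne (Nat.one_le_iff_ne_zero.mpr hk0) (Ne.symm hcon)
    have h8 : (v x) ^ k < v x :=
      pow_lt_self_of_lt_one₀ (zero_lt_iff.mpr hvx0) hvxlt h7
    rw [hvxk, ← hvxσ] at h8
    exact lt_irrefl _ h8
  have hdl : d = n := by rw [← hk, hk1, mul_one]
  show n ∣ H.index
  rw [Subgroup.index_eq_card, ← hdl]
  exact orderOf_dvd_natCard _


/-- **Divisibility of ramification index and residue degree (from the Remark)**: if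
`Γ_ν⁺` has a smallest element `σ` and `ω` is a valuation of `L` extending `ν` with
`ω(φᵢ(α)) = σ/lᵢ` (multiplicatively: `ω(φᵢ(α))^lᵢ` equals the image of `σ = ν(a)`),
then `lᵢ` divides `e(ω/ν) = [Γ_ω : Γ_ν]` and `deg φᵢ` divides `f(ω/ν) = [k_ω : k_ν]`;
in particular `k_ω` contains a subfield isomorphic to `k_ν[x]/(φ̄ᵢ)` (there is a ring
homomorphism — necessarily injective — from `k_ν[x]/(φ̄ᵢ)` into `k_ω`). -/
theorem stmt_15
    {K L : Type*} [Field K] [Field L] [Algebra K L]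
    {Γ₀ : Type*} [LinearOrderedCommGroupWithZero Γ₀]
    (v : Valuation K Γ₀)
    [Algebra ↥v.valuationSubring L] [IsScalarTower (↥v.valuationSubring) K L]
    (f : Polynomial ↥v.valuationSubring) (hfmonic : f.Monic)
    (hfirr : Irreducible (f.map (algebraMap (↥v.valuationSubring) K)))
    (α : L) (hαroot : Polynomial.aeval α f = 0)
    (hαgen : Algebra.adjoin K {α} = ⊤)
    (r : ℕ) (l : Fin r → ℕ) (hl : ∀ i, 1 ≤ l i)
    (φ : Fin r → Polynomial ↥v.valuationSubring)
    (hφmonic : ∀ i, (φ i).Monic)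
    (hφirr : ∀ i, Irreducible ((φ i).map (IsLocalRing.residue ↥v.valuationSubring)))
    (hφdist : ∀ i j, i ≠ j →
      (φ i).map (IsLocalRing.residue ↥v.valuationSubring) ≠
        (φ j).map (IsLocalRing.residue ↥v.valuationSubring))
    (hfbar : f.map (IsLocalRing.residue ↥v.valuationSubring) =
      ∏ i, ((φ i).map (IsLocalRing.residue ↥v.valuationSubring)) ^ (l i))
    (σ : Γ₀) (hσ : IsMinPosValue v σ)
    (i : Fin r)
    (O : ValuationSubring L) (hO : O.comap (algebraMap K L) = v.valuationSubring)
    (a : K) (ha : v a = σ)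
    (hval : O.valuation (Polynomial.aeval α (φ i)) ^ (l i) =
      O.valuation (algebraMap K L a)) :
    (l i) ∣ ramIdx v O ∧
    (φ i).natDegree ∣ resDeg v O hO ∧
    Nonempty ((Polynomial (IsLocalRing.ResidueField ↥v.valuationSubring) ⧸
        Ideal.span {(φ i).map (IsLocalRing.residue ↥v.valuationSubring)}) →+*
      IsLocalRing.ResidueField ↥O) := by
  classical
  have hle := aux_le_iff' v O hO
  have ha0 : a ≠ 0 := fun h => hσ.1.1 (by rw [← ha, h, map_zero])
  have hwa0 : O.valuation (algebraMap K L a) ≠ 0 :=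
    (Valuation.ne_zero_iff _).mpr ((_root_.map_ne_zero _).mpr ha0)
  have hli : l i ≠ 0 := Nat.one_le_iff_ne_zero.mp (hl i)
  have hwφ0 : O.valuation (Polynomial.aeval α (φ i)) ≠ 0 := by
    intro h
    rw [h, zero_pow hli] at hval
    exact hwa0 hval.symm
  -- strict inequalities
  have hwa_lt : O.valuation (algebraMap K L a) < 1 := by
    have h1 := hle 1 a
    simp only [map_one] at h1
    rw [← not_le]
    intro hcon
    exact absurd (h1.mp hcon) (not_le.mpr (show v a < 1 by rw [ha]; exact hσ.1.2.1))
  have hwφ_lt : O.valuation (Polynomial.aeval α (φ i)) < 1 := by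
    by_contra hcon
    push_neg at hcon
    have h2 : (1 : O.ValueGroup) ≤ O.valuation (Polynomial.aeval α (φ i)) ^ l i :=
      one_le_pow₀ hcon
    rw [hval] at h2
    exact absurd hwa_lt (not_lt.mpr h2)
  -- Part 1 : ramification index
  constructor
  · exact aux_part1' v O hO σ hσ (l i) hli _ a ha hwa0 hwφ0 hval
  -- Parts 2 and 3
  · haveI := isLocalHom_liftHom v O hO
    have hcompL : (algebraMap (↥O) L).comp (liftHom v O hO) =
        algebraMap (↥v.valuationSubring) L := by
      ext z
      rw [RingHom.comp_apply, IsScalarTower.algebraMap_apply (↥v.valuationSubring) K L]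
      rfl
    have hInt : Valuation.Integers O.valuation ↥O :=
      { hom_inj := Subtype.coe_injective
        map_le_one := fun r => O.valuation_le_one r
        exists_of_le_one := fun {r} hr => ⟨⟨r, O.mem_of_valuation_le_one r hr⟩, rfl⟩ }
    have hαmem : α ∈ O := by
      have hint : IsIntegral (↥O) α := by
        refine ⟨f.map (liftHom v O hO), hfmonic.map _, ?_⟩
        rw [Polynomial.eval₂_map, hcompL]
        exact hαroot
      exact O.mem_of_valuation_le_one α (hInt.mem_of_integral hint)
    have hφαO : (algebraMap (↥O) L) (Polynomial.eval₂ (liftHom v O hO) ⟨α, hαmem⟩ (φ i)) =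
        Polynomial.aeval α (φ i) := by
      rw [Polynomial.hom_eval₂, hcompL]
      rfl
    have hmemMax : Polynomial.eval₂ (liftHom v O hO) ⟨α, hαmem⟩ (φ i) ∈
        IsLocalRing.maximalIdeal ↥O := by
      rw [ValuationSubring.valuation_lt_one_iff]
      show O.valuation ((algebraMap (↥O) L) _) < 1
      rw [hφαO]
      exact hwφ_lt
    have hβ : Polynomial.eval₂ (IsLocalRing.ResidueField.map (liftHom v O hO))
        (IsLocalRing.residue (↥O) ⟨α, hαmem⟩)
        ((φ i).map (IsLocalRing.residue ↥v.valuationSubring)) = 0 := by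
      rw [Polynomial.eval₂_map]
      have hcomp2 : (IsLocalRing.ResidueField.map (liftHom v O hO)).comp
          (IsLocalRing.residue ↥v.valuationSubring) =
          (IsLocalRing.residue ↥O).comp (liftHom v O hO) := by
        ext z
        exact IsLocalRing.ResidueField.map_residue _ z
      rw [hcomp2, ← Polynomial.hom_eval₂]
      exact Ideal.Quotient.eq_zero_iff_mem.mpr hmemMax
    constructor
    · -- residue degree divisibility
      set pbar := (φ i).map (IsLocalRing.residue ↥v.valuationSubring) with hpbardef
      haveI : Fact (Irreducible pbar) := ⟨hφirr i⟩
      have hpne : pbar ≠ 0 := ((hφmonic i).map _).ne_zero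
      letI : Algebra (IsLocalRing.ResidueField ↥v.valuationSubring) (IsLocalRing.ResidueField ↥O) :=
        (IsLocalRing.ResidueField.map (liftHom v O hO)).toAlgebra
      have hβ' : Polynomial.aeval (IsLocalRing.residue (↥O) ⟨α, hαmem⟩) pbar = 0 := hβ
      let ψa := AdjoinRoot.liftAlgHom pbar (Algebra.ofId _ _) (IsLocalRing.residue (↥O) ⟨α, hαmem⟩) hβ'
      letI : Algebra (AdjoinRoot pbar) (IsLocalRing.ResidueField ↥O) := ψa.toRingHom.toAlgebra
      haveI : IsScalarTower (IsLocalRing.ResidueField ↥v.valuationSubring) (AdjoinRoot pbar)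
          (IsLocalRing.ResidueField ↥O) :=
        IsScalarTower.of_algebraMap_eq' (ψa.comp_algebraMap).symm
      have hfr : Module.finrank (IsLocalRing.ResidueField ↥v.valuationSubring)
          (AdjoinRoot pbar) = (φ i).natDegree := by
        rw [(AdjoinRoot.powerBasis hpne).finrank, AdjoinRoot.powerBasis_dim]
        exact (hφmonic i).natDegree_map _
      have htower := Module.finrank_mul_finrank
        (IsLocalRing.ResidueField ↥v.valuationSubring) (AdjoinRoot pbar)
        (IsLocalRing.ResidueField ↥O)
      show (φ i).natDegree ∣ Module.finrank (IsLocalRing.ResidueField ↥v.valuationSubring)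
        (IsLocalRing.ResidueField ↥O)
      exact ⟨_, (hfr ▸ htower).symm⟩
    · -- embedding of the residue field extension
      refine ⟨Ideal.Quotient.lift _
        (Polynomial.eval₂RingHom (IsLocalRing.ResidueField.map (liftHom v O hO))
          (IsLocalRing.residue (↥O) ⟨α, hαmem⟩)) ?_⟩
      intro p hp
      have hker : Ideal.span {(φ i).map (IsLocalRing.residue ↥v.valuationSubring)} ≤
          RingHom.ker (Polynomial.eval₂RingHom (IsLocalRing.ResidueField.map (liftHom v O hO))
            (IsLocalRing.residue (↥O) ⟨α, hαmem⟩)) := by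
        rw [Ideal.span_le, Set.singleton_subset_iff]
        simp only [SetLike.mem_coe, RingHom.mem_ker, Polynomial.coe_eval₂RingHom]
        exact hβ
      exact hker hp
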